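/- Let F be the free group on a countable set of generators {x_i}. Define sequences by the recursion s^{i+1}_τ = s^{i+1}_{τ-1} · s^i_τ (prefix product), with s^0_τ = x_τ. Then for every n and t ≥ n, the reduced word expressing s^0_t in terms of the letters {s^n_{t-n}, ..., s^n_t} (via the inversion s^i_τ = (s^{i+1}_{τ-1})^{-1} s^{i+1}_τ) uses only indices in the window [t-n, t], and has length 2^n as a product of the elements s^n_{t_i} and their inverses. -/

import Mathlib

/-- Left-to-right prefix products of a sequence in the free group (or any group):
`(prefixProd f) τ = f 0 * f 1 * ... * f τ`, so that
`(prefixProd f) τ = (prefixProd f) (τ-1) * f τ`. -/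
def prefixProd {G : Type*} [Group G] (f : ℕ → G) (τ : ℕ) : G :=
  ((List.range (τ + 1)).map f).prod

/-- The `n`-fold prefix-product aggregation of the generator sequence of the free group
on countably many generators: `s^0_τ = x_τ` and `s^{i+1} = prefixProd s^i`. -/
def sLevel (n : ℕ) : ℕ → FreeGroup ℕ :=
  prefixProd^[n] FreeGroup.of

lemma prefixProd_succ {G : Type*} [Group G] (f : ℕ → G) (τ : ℕ) :
    prefixProd f (τ + 1) = prefixProd f τ * f (τ + 1) := by
  simp [prefixProd, List.range_succ, mul_assoc]

lemma sLevel_succ_fn (n : ℕ) : sLevel (n + 1) = prefixProd (sLevel n) := by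
  rw [sLevel, Function.iterate_succ']; rfl

lemma sLevel_expand (n τ : ℕ) (hτ : 1 ≤ τ) :
    sLevel n τ = (sLevel (n + 1) (τ - 1))⁻¹ * sLevel (n + 1) τ := by
  obtain ⟨τ', rfl⟩ : ∃ τ', τ = τ' + 1 := ⟨τ - 1, by omega⟩
  rw [sLevel_succ_fn]
  simp only [Nat.add_sub_cancel]
  rw [prefixProd_succ]
  group

/-- Evaluation of a signed letter at level `n`. -/
def gfun (n : ℕ) (p : ℕ × Bool) : FreeGroup ℕ :=
  if p.2 then sLevel n p.1 else (sLevel n p.1)⁻¹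

/-- Expansion step for a signed letter. -/
def stepPair (p : ℕ × Bool) : List (ℕ × Bool) :=
  if p.2 then [(p.1 - 1, false), (p.1, true)] else [(p.1, false), (p.1 - 1, true)]

lemma prod_step (n : ℕ) (L : List (ℕ × Bool)) (hpos : ∀ p ∈ L, 1 ≤ p.1) :
    ((L.flatMap stepPair).map (gfun (n + 1))).prod = (L.map (gfun n)).prod := by
  induction L with
  | nil => simp
  | cons p L ih =>
    have hp : 1 ≤ p.1 := hpos p (by simp)
    have hrest := ih (fun q hq => hpos q (by simp [hq]))
    rw [List.flatMap_cons, List.map_append, List.prod_append, hrest,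
      List.map_cons, List.prod_cons]
    congr 1
    rcases p with ⟨τ, b⟩
    cases b <;> simp [stepPair, gfun, sLevel_expand n τ hp]

lemma core (n t : ℕ) (ht : n ≤ t) :
    ∃ L : List (ℕ × Bool), L.length = 2 ^ n ∧
      (∀ p ∈ L, t - n ≤ p.1 ∧ p.1 ≤ t) ∧
      FreeGroup.of t = (L.map (gfun n)).prod := by
  induction n with
  | zero =>
    refine ⟨[(t, true)], by simp, by simp, ?_⟩
    simp [gfun, sLevel]
  | succ n ih =>
    obtain ⟨L, hlen, hwin, hprod⟩ := ih (le_trans (Nat.le_succ n) ht)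
    refine ⟨L.flatMap stepPair, ?_, ?_, ?_⟩
    · rw [List.length_flatMap]
      have : ∀ p ∈ L, (stepPair p).length = 2 := by
        intro p _; rcases p with ⟨τ, b⟩; cases b <;> simp [stepPair]
      have hc : (fun a : ℕ × Bool => (stepPair a).length) = fun _ : ℕ × Bool => 2 :=
        funext fun p => by rcases p with ⟨τ, b⟩; cases b <;> simp [stepPair]
      rw [hc]
      simp [List.map_const', List.sum_replicate, hlen, pow_succ, Nat.mul_comm]
    · intro q hq
      rw [List.mem_flatMap] at hq
      obtain ⟨p, hpL, hqs⟩ := hq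
      obtain ⟨h1, h2⟩ := hwin p hpL
      have hp1 : 1 ≤ p.1 := by omega
      rcases p with ⟨τ, b⟩
      cases b <;> simp [stepPair] at hqs <;> rcases hqs with h | h <;>
        simp [h] <;> omega
    · rw [prod_step n L (fun p hp => by have := (hwin p hp).1; omega)]
      exact hprod

lemma ofFn_eq_map {α β : Type*} (L : List α) (g : α → β) {m : ℕ} (h : L.length = m) :
    List.ofFn (fun i : Fin m => g (L.get (Fin.cast h.symm i))) = L.map g := by
  subst h
  simp only [Fin.cast_refl, Function.comp]
  rw [show (fun i : Fin L.length => g (L.get (id i))) = g ∘ L.get from rfl]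
  rw [← List.map_ofFn, List.ofFn_get]

/-- For `t ≥ n`, the generator `s^0_t = x_t` is expressible as a product of exactly `2^n`
factors, each of which is some `s^n_{t_i}` or its inverse with index `t_i` in the window
`[t - n, t]`. -/
theorem sLevel_window_expression (n t : ℕ) (ht : n ≤ t) :
    ∃ (idx : Fin (2 ^ n) → ℕ) (sign : Fin (2 ^ n) → Bool),
      (∀ i : Fin (2 ^ n), t - n ≤ idx i ∧ idx i ≤ t) ∧
      FreeGroup.of t =
        (List.ofFn (fun i : Fin (2 ^ n) =>
          if sign i then sLevel n (idx i) else (sLevel n (idx i))⁻¹)).prod := by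
  obtain ⟨L, hlen, hwin, hprod⟩ := core n t ht
  refine ⟨fun i => (L.get (Fin.cast hlen.symm i)).1,
    fun i => (L.get (Fin.cast hlen.symm i)).2, ?_, ?_⟩
  · intro i
    exact hwin _ (L.get_mem _)
  · rw [show (fun i : Fin (2 ^ n) =>
        if (L.get (Fin.cast hlen.symm i)).2 then sLevel n (L.get (Fin.cast hlen.symm i)).1
        else (sLevel n (L.get (Fin.cast hlen.symm i)).1)⁻¹) =
        (fun i : Fin (2 ^ n) => gfun n (L.get (Fin.cast hlen.symm i))) from rfl]
    rw [ofFn_eq_map L (gfun n) hlen]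
    exact hprod
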